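/- Let R be a finite commutative local ring, m ≤ n, and A an m×n matrix over R. Then the McCoy rank of A equals m if and only if there exists an invertible n×n matrix S over R such that AS = (I_m, 0). -/

import Mathlib

open Matrix

/-- The ideal generated by all `k × k` minors of a matrix. -/
def minorsIdeal {R : Type*} [CommRing R] {m n : ℕ}
    (A : Matrix (Fin m) (Fin n) R) (k : ℕ) : Ideal R :=
  Ideal.span {d | ∃ (r : Fin k → Fin m) (c : Fin k → Fin n), d = (A.submatrix r c).det}

/-- The McCoy rank of a matrix. -/
noncomputable def mccoyRank {R : Type*} [CommRing R] {m n : ℕ}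
    (A : Matrix (Fin m) (Fin n) R) : ℕ :=
  sSup {k | (minorsIdeal A k).annihilator = ⊥}

/-- The `m × n` block matrix `(I_m, 0)`. -/
def idZero (R : Type*) [CommRing R] (m n : ℕ) : Matrix (Fin m) (Fin n) R :=
  Matrix.of fun i j => if (i : ℕ) = (j : ℕ) then 1 else 0

section auxLemmas

variable {R : Type*} [CommRing R] {m n : ℕ}

/-- Easy half of Cauchy–Binet: the determinant of `A * M` lies in the ideal of `m × m`
minors of `A`. -/
lemma det_mul_mem_minorsIdeal (A : Matrix (Fin m) (Fin n) R) (M : Matrix (Fin n) (Fin m) R) :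
    (A * M).det ∈ minorsIdeal A m := by
  have h1 : (A * M).det = (Mᵀ * Aᵀ).det := by
    rw [← Matrix.det_transpose (A * M), Matrix.transpose_mul]
  have h2 : (Mᵀ * Aᵀ) = Matrix.of fun j => ∑ k, M k j • (Aᵀ k) := by
    ext j i
    simp [Matrix.mul_apply, mul_comm]
  rw [h1, h2]
  have h3 : Matrix.det (Matrix.of fun j => ∑ k, M k j • (Aᵀ k)) =
      (Matrix.detRowAlternating : (Fin m → R) [⋀^Fin m]→ₗ[R] R).toMultilinearMap
        (fun j => ∑ k : Fin n, M k j • (Aᵀ k)) := rfl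
  rw [h3, MultilinearMap.map_sum]
  refine Ideal.sum_mem _ fun g _ => ?_
  have h4 : (Matrix.detRowAlternating : (Fin m → R) [⋀^Fin m]→ₗ[R] R).toMultilinearMap
      (fun j => M (g j) j • (Aᵀ (g j)))
      = (∏ j, M (g j) j) • (Matrix.detRowAlternating :
          (Fin m → R) [⋀^Fin m]→ₗ[R] R).toMultilinearMap (fun j => Aᵀ (g j)) :=
    MultilinearMap.map_smul_univ _ _ _
  rw [h4, smul_eq_mul]
  refine Ideal.mul_mem_left _ _ (Ideal.subset_span ?_)
  refine ⟨id, g, ?_⟩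
  have h5 : (Matrix.detRowAlternating : (Fin m → R) [⋀^Fin m]→ₗ[R] R).toMultilinearMap
      (fun j => Aᵀ (g j)) = (Aᵀ.submatrix g id).det := rfl
  rw [h5, ← Matrix.det_transpose, Matrix.transpose_submatrix, Matrix.transpose_transpose]

lemma minorsIdeal_zero (A : Matrix (Fin m) (Fin n) R) : minorsIdeal A 0 = ⊤ := by
  rw [Ideal.eq_top_iff_one]
  exact Ideal.subset_span ⟨Fin.elim0, Fin.elim0, Matrix.det_isEmpty.symm⟩

lemma minorsIdeal_eq_bot_of_lt (A : Matrix (Fin m) (Fin n) R) {k : ℕ} (hk : m < k) :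
    minorsIdeal A k = ⊥ := by
  rw [eq_bot_iff, minorsIdeal, Ideal.span_le]
  rintro d ⟨r, c, rfl⟩
  obtain ⟨i, j, hne, hij⟩ := Fintype.exists_ne_map_eq_of_card_lt r (by simpa using hk)
  have : (A.submatrix r c).det = 0 :=
    Matrix.det_zero_of_row_eq hne (by ext l; simp [hij])
  simp [this]

lemma ann_top_eq_bot : (⊤ : Ideal R).annihilator = ⊥ := by
  rw [eq_bot_iff]
  intro x hx
  have := Submodule.mem_annihilator.mp hx 1 trivial
  simpa using this

lemma ann_eq_bot_iff [IsLocalRing R] [Fintype R] (I : Ideal R) :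
    I.annihilator = ⊥ ↔ I = ⊤ := by
  constructor
  · intro h
    by_contra hI
    have hle : I ≤ IsLocalRing.maximalIdeal R := IsLocalRing.le_maximalIdeal hI
    have hjac : IsNilpotent (Ideal.jacobson (⊥ : Ideal R)) :=
      IsArtinianRing.isNilpotent_jacobson_bot
    rw [IsLocalRing.jacobson_eq_maximalIdeal ⊥ bot_ne_top] at hjac
    obtain ⟨N, hN⟩ := hjac
    have hIN : I ^ N = ⊥ := by
      have := Ideal.pow_right_mono hle N
      rw [hN] at this
      exact le_bot_iff.mp this
    classical
    have hP : ∃ k, I ^ k = ⊥ := ⟨N, hIN⟩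
    let k := Nat.find hP
    have hk : I ^ k = ⊥ := Nat.find_spec hP
    have hk0 : k ≠ 0 := by
      intro h0
      have : I ^ k = ⊤ := by rw [h0, pow_zero, Ideal.one_eq_top]
      rw [hk] at this
      have h1 : (1:R) ∈ (⊥ : Ideal R) := this ▸ Submodule.mem_top
      simp only [Ideal.mem_bot] at h1
      exact one_ne_zero h1
    have hk1 : I ^ (k - 1) ≠ ⊥ := Nat.find_min hP (Nat.sub_lt (Nat.pos_of_ne_zero hk0) one_pos)
    obtain ⟨x, hxI, hx0⟩ := Submodule.exists_mem_ne_zero_of_ne_bot hk1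
    have hxann : x ∈ I.annihilator := by
      rw [Submodule.mem_annihilator]
      intro y hy
      have : x * y ∈ I ^ k := by
        have hks : k = (k - 1) + 1 := (Nat.succ_pred_eq_of_pos (Nat.pos_of_ne_zero hk0)).symm
        rw [hks, pow_succ]
        exact Ideal.mul_mem_mul hxI hy
      rw [hk] at this
      simpa using this
    rw [h] at hxann
    exact hx0 (by simpa using hxann)
  · rintro rfl
    exact ann_top_eq_bot

lemma mccoyRank_eq_top_iff [IsLocalRing R] [Fintype R] (A : Matrix (Fin m) (Fin n) R) :
    mccoyRank A = m ↔ minorsIdeal A m = ⊤ := by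
  have hbot : ((⊥ : Ideal R) ≠ ⊤) := by
    intro h
    have h1 : (1:R) ∈ (⊥ : Ideal R) := h ▸ Submodule.mem_top
    simp only [Ideal.mem_bot] at h1
    exact one_ne_zero h1
  have hset : {k | (minorsIdeal A k).annihilator = ⊥} = {k | minorsIdeal A k = ⊤} := by
    ext k; exact ann_eq_bot_iff _
  have h0 : 0 ∈ {k | (minorsIdeal A k).annihilator = ⊥} := by
    simp only [Set.mem_setOf_eq, minorsIdeal_zero]; exact ann_top_eq_bot
  have hbdd : ∀ k ∈ {k | (minorsIdeal A k).annihilator = ⊥}, k ≤ m := by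
    intro k hk
    by_contra hlt
    rw [hset] at hk
    exact hbot ((minorsIdeal_eq_bot_of_lt A (Nat.lt_of_not_le hlt)).symm.trans hk)
  constructor
  · intro h
    have hmem := Nat.sSup_mem ⟨0, h0⟩ ⟨m, hbdd⟩
    rw [show sSup {k | (minorsIdeal A k).annihilator = ⊥} = m from h] at hmem
    rw [hset] at hmem
    exact hmem
  · intro h
    have hm : m ∈ {k | (minorsIdeal A k).annihilator = ⊥} := by
      rw [hset]; exact h
    exact le_antisymm (csSup_le ⟨0, h0⟩ hbdd) (le_csSup ⟨m, hbdd⟩ hm)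

lemma exists_unit_minor [IsLocalRing R] (A : Matrix (Fin m) (Fin n) R)
    (h : minorsIdeal A m = ⊤) :
    ∃ c : Fin m → Fin n, Function.Injective c ∧ IsUnit (A.submatrix id c).det := by
  have hex : ∃ (r : Fin m → Fin m) (c : Fin m → Fin n), IsUnit (A.submatrix r c).det := by
    by_contra hno
    push_neg at hno
    have hsub : {d : R | ∃ (r : Fin m → Fin m) (c : Fin m → Fin n), d = (A.submatrix r c).det}
        ⊆ (IsLocalRing.maximalIdeal R : Set R) := by
      rintro d ⟨r, c, rfl⟩
      exact hno r c
    have := Ideal.span_le.mpr hsub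
    rw [show Ideal.span {d : R | ∃ (r : Fin m → Fin m) (c : Fin m → Fin n),
        d = (A.submatrix r c).det} = minorsIdeal A m from rfl, h] at this
    exact (Ideal.IsMaximal.ne_top (IsLocalRing.maximalIdeal.isMaximal R)) (top_le_iff.mp this)
  obtain ⟨r, c, hu⟩ := hex
  have hr : Function.Injective r := by
    intro i j hij
    by_contra hne
    have : (A.submatrix r c).det = 0 :=
      Matrix.det_zero_of_row_eq hne (by ext l; simp [hij])
    rw [this] at hu
    exact not_isUnit_zero hu
  have hc : Function.Injective c := by
    intro i j hij
    by_contra hne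
    have : (A.submatrix r c).det = 0 :=
      Matrix.det_zero_of_column_eq hne (fun k => by simp [hij])
    rw [this] at hu
    exact not_isUnit_zero hu
  refine ⟨c, hc, ?_⟩
  have hrb : Function.Bijective r := (Finite.injective_iff_bijective).mp hr
  let ρ : Equiv.Perm (Fin m) := Equiv.ofBijective r hrb
  have hsub : A.submatrix r c = (A.submatrix id c).submatrix ρ id := by
    ext i j; rfl
  rw [hsub, Matrix.det_permute] at hu
  exact isUnit_of_mul_isUnit_right hu

lemma exists_GL_of_unit_minor (hmn : m ≤ n) (A : Matrix (Fin m) (Fin n) R)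
    (c : Fin m → Fin n) (hc : Function.Injective c) (hu : IsUnit (A.submatrix id c).det) :
    ∃ S : GL (Fin n) R, A * (S : Matrix (Fin n) (Fin n) R) = idZero R m n := by
  classical
  -- the standard equiv `Fin m ⊕ Fin (n - m) ≃ Fin n`
  let g : Fin m ⊕ Fin (n - m) ≃ Fin n :=
    finSumFinEquiv.trans (finCongr (Nat.add_sub_cancel' hmn))
  have hg_inl : ∀ i : Fin m, ((g (Sum.inl i) : Fin n) : ℕ) = (i : ℕ) := by
    intro i; simp [g]
  have hg_inr : ∀ j : Fin (n - m), ((g (Sum.inr j) : Fin n) : ℕ) = m + (j : ℕ) := by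
    intro j; simp [g]
  -- an equiv `f` with `f ∘ Sum.inl = c`
  have hcard : Fintype.card ↥(Set.range c)ᶜ = n - m := by
    rw [Fintype.card_compl_set]
    rw [Set.card_range_of_injective hc]
    simp
  let e₂ : Fin (n - m) ≃ ↥(Set.range c)ᶜ := (Fintype.equivFinOfCardEq hcard).symm
  let f : Fin m ⊕ Fin (n - m) ≃ Fin n :=
    (Equiv.sumCongr (Equiv.ofInjective c hc) e₂).trans (Equiv.Set.sumCompl (Set.range c))
  have hf_inl : ∀ i : Fin m, f (Sum.inl i) = c i := by
    intro i; simp [f]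
  -- the blocks of `A` after reindexing columns by `f`
  let A₁ : Matrix (Fin m) (Fin m) R := A.submatrix id (f ∘ Sum.inl)
  let A₂ : Matrix (Fin m) (Fin (n - m)) R := A.submatrix id (f ∘ Sum.inr)
  have hA₁ : A₁ = A.submatrix id c := by
    ext i j; simp [A₁, hf_inl]
  have hdet : IsUnit A₁.det := by rw [hA₁]; exact hu
  haveI : Invertible A₁ := A₁.invertibleOfIsUnitDet hdet
  let T : Matrix (Fin m ⊕ Fin (n - m)) (Fin m ⊕ Fin (n - m)) R :=
    Matrix.fromBlocks (⅟A₁) (-(⅟A₁ * A₂)) 0 1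
  haveI : Invertible (1 : Matrix (Fin (n - m)) (Fin (n - m)) R) := invertibleOne
  haveI : Invertible T := Matrix.fromBlocksZero₂₁Invertible (⅟A₁) (-(⅟A₁ * A₂)) 1
  have hAf : A.submatrix id f = Matrix.fromCols A₁ A₂ := by
    ext i j
    cases j with
    | inl j => rfl
    | inr j => rfl
  have hmulT : Matrix.fromCols A₁ A₂ * T =
      Matrix.fromCols (1 : Matrix (Fin m) (Fin m) R) 0 := by
    have h1 : A₁ * ⅟A₁ + A₂ * (0 : Matrix (Fin (n - m)) (Fin m) R) = 1 := by simp
    have h2 : A₁ * -(⅟A₁ * A₂) + A₂ * (1 : Matrix (Fin (n - m)) (Fin (n - m)) R) = 0 := by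
      rw [Matrix.mul_neg, ← Matrix.mul_assoc, mul_invOf_self, Matrix.one_mul, Matrix.mul_one]
      simp
    rw [Matrix.fromCols_mul_fromBlocks, h1, h2]
  -- the matrix `S` and its inverse
  let S : Matrix (Fin n) (Fin n) R := T.submatrix f.symm g.symm
  let U : Matrix (Fin n) (Fin n) R := (⅟T).submatrix g.symm f.symm
  have hSU : S * U = 1 := by
    rw [show S * U = (T * ⅟T).submatrix f.symm f.symm from
      Matrix.submatrix_mul_equiv T (⅟T) f.symm g.symm f.symm]
    rw [mul_invOf_self]
    exact Matrix.submatrix_one_equiv f.symm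
  have hUS : U * S = 1 := mul_eq_one_comm.mp hSU
  refine ⟨⟨S, U, hSU, hUS⟩, ?_⟩
  -- compute `A * S`
  have hA : (A.submatrix id f).submatrix id f.symm = A := by
    rw [Matrix.submatrix_submatrix]
    simp [Equiv.self_comp_symm]
  have key : A * S = (Matrix.fromCols (1 : Matrix (Fin m) (Fin m) R) 0).submatrix id g.symm := by
    calc A * S = (A.submatrix id f).submatrix id f.symm * T.submatrix f.symm g.symm := by rw [hA]
    _ = ((A.submatrix id f) * T).submatrix id g.symm :=
        Matrix.submatrix_mul_equiv _ _ _ _ _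
    _ = _ := by rw [hAf, hmulT]
  rw [show ((⟨S, U, hSU, hUS⟩ : (Matrix (Fin n) (Fin n) R)ˣ) : Matrix (Fin n) (Fin n) R) = S
    from rfl, key]
  ext i j
  obtain ⟨s, rfl⟩ := g.surjective j
  rw [Matrix.submatrix_apply, Equiv.symm_apply_apply]
  cases s with
  | inl k =>
    have hk : ((g (Sum.inl k)) : ℕ) = (k : ℕ) := hg_inl k
    simp only [idZero, Matrix.of_apply, hk, id_eq]
    by_cases h : i = k
    · subst h
      simp [Matrix.fromCols]
    · rw [if_neg (fun hik => h (Fin.ext hik))]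
      simp [Matrix.fromCols, Matrix.one_apply_ne h]
  | inr k =>
    have hk : ((g (Sum.inr k)) : ℕ) = m + (k : ℕ) := hg_inr k
    simp only [idZero, Matrix.of_apply, hk, id_eq]
    rw [if_neg (by omega)]
    simp [Matrix.fromCols]

end auxLemmas

theorem mccoyRank_eq_iff_exists_GL {R : Type*} [CommRing R] [IsLocalRing R] [Fintype R]
    {m n : ℕ} (hmn : m ≤ n) (A : Matrix (Fin m) (Fin n) R) :
    mccoyRank A = m ↔
      ∃ S : GL (Fin n) R, A * (S : Matrix (Fin n) (Fin n) R) = idZero R m n := by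
  rw [mccoyRank_eq_top_iff]
  constructor
  · intro h
    obtain ⟨c, hc, hu⟩ := exists_unit_minor A h
    exact exists_GL_of_unit_minor hmn A c hc hu
  · rintro ⟨S, hS⟩
    rw [Ideal.eq_top_iff_one]
    set ι : Fin m → Fin n := Fin.castLE hmn with hι
    let M : Matrix (Fin n) (Fin m) R := (S : Matrix (Fin n) (Fin n) R).submatrix id ι
    have h1 : A * M = (A * (S : Matrix (Fin n) (Fin n) R)).submatrix id ι := by
      have := Matrix.submatrix_mul_equiv A (S : Matrix (Fin n) (Fin n) R) id
        (Equiv.refl (Fin n)) ι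
      simpa using this
    have h2 : (A * M).det = 1 := by
      rw [h1, hS]
      have heq : (idZero R m n).submatrix id ι = (1 : Matrix (Fin m) (Fin m) R) := by
        ext i j
        simp only [idZero, Matrix.submatrix_apply, Matrix.of_apply, id_eq, hι,
          Fin.coe_castLE, Matrix.one_apply, Fin.ext_iff]
      rw [heq, Matrix.det_one]
    exact h2 ▸ det_mul_mem_minorsIdeal A M
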